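/- arXiv:0903.2555 — 3 statements merged into one kernel-verified Lean document; each statement's English description precedes it below -/
import Mathlib

section
/- Let X and Y be subsets of the positive integers, let A = X ∪ Y, and suppose B ⊆ ℕ is such that for every n ≥ 1, b_n = |B ∩ [n]| satisfies: b_n = x_n + y_n if n+1 ∈ X ∩ Y; b_n = y_n if n+1 ∈ X − Y; and b_n = x_n if n+1 ∈ Y − X (where x_n = |X ∩ [n]| and y_n = |Y ∩ [n]|). Then for all n ≥ 1 and all k ≥ 0, D_{n,k}^{A,B} = A_{n,k}^{X,Y}. -/
/-- `cnt X n` is `|X ∩ [n]|` where `[n] = {1, ..., n}`. -/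
noncomputable def cnt (X : Set ℕ) (n : ℕ) : ℕ := (X ∩ Set.Icc 1 n).ncard

/-- `des_{X,Y}(σ)`: number of `i` with `σ_i > σ_{i+1}`, `σ_i ∈ X` and `σ_{i+1} ∈ Y`
(positions and values of `Fin n` are identified with `{1, ..., n}` via `i ↦ i + 1`). -/
noncomputable def desCount (X Y : Set ℕ) (n : ℕ) (σ : Equiv.Perm (Fin n)) : ℕ :=
  {i : Fin n | ∃ h : (i : ℕ) + 1 < n,
    (σ ⟨(i : ℕ) + 1, h⟩ : ℕ) < (σ i : ℕ) ∧
    ((σ i : ℕ) + 1) ∈ X ∧ ((σ ⟨(i : ℕ) + 1, h⟩ : ℕ) + 1) ∈ Y}.ncard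

/-- `D_{n,s}^{X,Y}`: the number of permutations of `[n]` with exactly `s`
`(X,Y)`-descents. -/
noncomputable def D (X Y : Set ℕ) (n s : ℕ) : ℕ :=
  Nat.card {σ : Equiv.Perm (Fin n) | desCount X Y n σ = s}

/-- `adj_{X,Y}(σ)`: number of `i` with `σ_i ∈ X` and `σ_{i+1} ∈ Y`
(positions and values of `Fin n` are identified with `{1, ..., n}` via `i ↦ i + 1`). -/
noncomputable def adjCount (X Y : Set ℕ) (n : ℕ) (σ : Equiv.Perm (Fin n)) : ℕ :=
  {i : Fin n | ∃ h : (i : ℕ) + 1 < n,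
    ((σ i : ℕ) + 1) ∈ X ∧ ((σ ⟨(i : ℕ) + 1, h⟩ : ℕ) + 1) ∈ Y}.ncard

/-- `A_{n,s}^{X,Y}`: the number of permutations of `[n]` with exactly `s`
`(X,Y)`-adjacencies. -/
noncomputable def A (X Y : Set ℕ) (n s : ℕ) : ℕ :=
  Nat.card {σ : Equiv.Perm (Fin n) | adjCount X Y n σ = s}

section AuxForDeqA
open List



/-- descent/adjacency statistic of a word, for a pair-predicate `f`. -/
def dstat (f : ℕ × ℕ → Bool) (l : List ℕ) : ℕ := (l.zip l.tail).countP f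

theorem dstat_nil (f) : dstat f [] = 0 := rfl

theorem dstat_cons (f : ℕ × ℕ → Bool) (hf0 : ∀ a, f (a, 0) = false) (a : ℕ) (s : List ℕ) :
    dstat f (a :: s) = dstat f s + (if f (a, s.getD 0 0) then 1 else 0) := by
  cases s with
  | nil => simp [dstat, hf0]
  | cons b t => simp [dstat, List.countP_cons, Nat.add_comm]

theorem dstat_append_zero (f : ℕ × ℕ → Bool) (hf0 : ∀ a, f (a, 0) = false) (l : List ℕ) :
    dstat f (l ++ [0]) = dstat f l := by
  induction l with
  | nil => simp [dstat, hf0]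
  | cons a t ih =>
      rw [List.cons_append, dstat_cons f hf0, dstat_cons f hf0, ih]
      congr 1
      cases t <;> simp [hf0]

/-- The pivotal insertion lemma. `lft p = (0::l).getD p 0`, `rgt p = (l++[0]).getD p 0`. -/
theorem dstat_insertIdx (f : ℕ × ℕ → Bool) (hf0 : ∀ a, f (a, 0) = false)
    (h0f : ∀ b, f (0, b) = false) (m : ℕ) :
    ∀ (l : List ℕ) (p : ℕ), p ≤ l.length →
    dstat f (l.insertIdx p m) + (if f ((0::l).getD p 0, (l ++ [0]).getD p 0) then 1 else 0)
      = dstat f l + (if f ((0::l).getD p 0, m) then 1 else 0)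
        + (if f (m, (l ++ [0]).getD p 0) then 1 else 0) := by
  intro l
  induction l with
  | nil =>
      intro p hp
      have : p = 0 := by simpa using hp
      subst this
      simp [dstat, h0f, hf0, ← Prod.mk_zero_zero]
  | cons a t ih =>
      intro p hp
      match p with
      | 0 =>
          simp only [List.insertIdx_zero, List.getD_cons_zero, List.cons_append,
            List.getD_cons_zero]
          rw [dstat_cons f hf0 m (a :: t)]
          simp [h0f]
      | (q+1) =>
          have hq : q ≤ t.length := by simpa using hp
          rw [List.insertIdx_succ_cons]
          have hins : dstat f (a :: t.insertIdx q m)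
              = dstat f (t.insertIdx q m)
                + (if f (a, (t.insertIdx q m).getD 0 0) then 1 else 0) :=
            dstat_cons f hf0 a _
          have hcons : dstat f (a :: t) = dstat f t + (if f (a, t.getD 0 0) then 1 else 0) :=
            dstat_cons f hf0 a t
          match q, hq with
          | 0, _ =>
              -- insert at front of t : word is a :: m :: t
              simp only [List.insertIdx_zero] at hins ⊢
              rw [hins, dstat_cons f hf0 m t, hcons]
              simp only [List.getD_cons_zero, List.cons_append, List.getD_cons_succ]
              cases t <;> simp <;> ring
          | (r+1), hq =>
              have hr : r + 1 ≤ t.length := hq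
              obtain ⟨c, t', rfl⟩ : ∃ c t', t = c :: t' := by
                cases t with
                | nil => simp at hr
                | cons c t' => exact ⟨c, t', rfl⟩
              have hhead : ((c :: t').insertIdx (r+1) m).getD 0 0 = c := by
                rw [List.insertIdx_succ_cons]; simp
              rw [hins, hhead, hcons]
              have := ih (r+1) hr
              simp only [List.getD_cons_succ, List.cons_append] at this ⊢
              simp only [List.getD_cons_zero] at hcons ⊢
              omega


theorem countP_inclexcl (u v : α → Bool) (l : List α) :
    l.countP (fun a => u a || v a) + l.countP (fun a => u a && v a)
      = l.countP u + l.countP v := by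
  induction l with
  | nil => simp
  | cons a t ih =>
      simp only [List.countP_cons]
      cases hu : u a <;> cases hv : v a <;> simp [hu, hv] <;> omega

theorem countP_index (d : α) (φ : α → Bool) :
    ∀ s : List α, (List.range s.length).countP (fun p => φ (s.getD p d)) = s.countP φ := by
  intro s
  induction s with
  | nil => simp
  | cons a t ih =>
      rw [List.length_cons, List.range_succ_eq_map, List.countP_cons, List.countP_map]
      have : List.countP ((fun p => φ ((a :: t).getD p d)) ∘ Nat.succ) (List.range t.length)
          = List.countP (fun p => φ (t.getD p d)) (List.range t.length) := by
        apply List.countP_congr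
        intro p _
        simp [Function.comp]
      rw [this, ih, List.countP_cons]
      simp [Nat.add_comm]

section
variable {α : Type*} {β : Type*}

theorem zip_append_left (u : List α) : ∀ (s : List α) (r : List β),
    r.length ≤ s.length → (s ++ u).zip r = s.zip r := by
  intro s
  induction s with
  | nil => intro r hr; simp at hr; simp [hr]
  | cons a s' ih =>
      intro r hr
      cases r with
      | nil => simp
      | cons b r' =>
          simp only [List.cons_append, List.zip_cons_cons]
          rw [ih r' (by simpa using hr)]
end

/-- the list of (left neighbour, right neighbour) pairs for the `l.length + 1` slots,
with sentinel `0` at both ends. -/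
def zext (l : List ℕ) : List (ℕ × ℕ) := (0 :: l).zip (l ++ [0])

theorem zext_eq (l : List ℕ) : zext l = (0 :: (l ++ [0])).zip (l ++ [0]) := by
  have h := zip_append_left (u := [0]) (0 :: l) (l ++ [0]) (by simp)
  rw [List.cons_append] at h
  exact h.symm

theorem zext_length (l : List ℕ) : (zext l).length = l.length + 1 := by
  simp [zext]

theorem countP_zext (f : ℕ × ℕ → Bool) (hf0 : ∀ a, f (a, 0) = false)
    (h0f : ∀ b, f (0, b) = false) (l : List ℕ) :
    (zext l).countP f = dstat f l := by
  have h1 : (zext l).countP f = dstat f (0 :: (l ++ [0])) := by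
    rw [zext_eq]; rfl
  rw [h1, dstat_cons f hf0, dstat_append_zero f hf0]
  simp [h0f]

theorem zext_getD (l : List ℕ) (p : ℕ) (hp : p < l.length + 1) :
    (zext l).getD p (0, 0) = ((0 :: l).getD p 0, (l ++ [0]).getD p 0) := by
  have hp1 : p < ((0 :: l).zip (l ++ [0])).length := by
    simpa [zext] using hp
  have hp2 : p < (0 :: l).length := by simpa using hp
  have hp3 : p < (l ++ [0]).length := by simp; omega
  rw [zext, List.getD_eq_getElem _ _ hp1, List.getElem_zip,
    List.getD_eq_getElem _ _ hp2, List.getD_eq_getElem _ _ hp3]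

/-- Key slot-counting lemma: the number of insertion slots whose resulting word has
statistic `k` equals a count over neighbour pairs. -/
theorem slot_count (f : ℕ × ℕ → Bool) (hf0 : ∀ a, f (a, 0) = false)
    (h0f : ∀ b, f (0, b) = false) (m : ℕ) (l : List ℕ) (k : ℕ) :
    (List.range (l.length + 1)).countP (fun p => dstat f (l.insertIdx p m) = k)
      = (zext l).countP (fun q =>
          dstat f l + (if f (q.1, m) then 1 else 0) + (if f (m, q.2) then 1 else 0)
            = k + (if f q then 1 else 0)) := by
  have hlen : (zext l).length = l.length + 1 := zext_length l
  rw [← hlen, ← countP_index (0, 0)]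
  apply List.countP_congr
  intro p hp
  have hp' : p < l.length + 1 := by
    have := List.mem_range.mp hp; omega
  rw [zext_getD l p hp']
  have key := dstat_insertIdx f hf0 h0f m l p (by omega)
  constructor <;> intro h <;> [skip; skip] <;>
    · simp only [decide_eq_true_eq] at h ⊢
      omega


theorem countP_diff {α : Type*} (P E : α → Bool) (l : List α)
    (hEP : ∀ q ∈ l, E q = true → P q = true) :
    l.countP P = l.countP E + l.countP (fun q => P q && !E q) := by
  induction l with
  | nil => simp
  | cons a t ih =>
      have ih' := ih (fun q hq => hEP q (List.mem_cons_of_mem a hq))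
      have ha := hEP a (List.mem_cons_self)
      simp only [List.countP_cons]
      cases hP : P a <;> cases hE : E a <;> simp_all <;> omega

theorem countP_not {α : Type*} (P : α → Bool) (l : List α) :
    l.countP (fun q => !P q) = l.length - l.countP P := by
  have := List.length_eq_countP_add_countP P (l := l)
  have h2 : l.countP (fun q => !P q) = l.countP (fun a => decide ¬P a = true) :=
    List.countP_congr (by intro x _; simp)
  omega

theorem shape1 {α : Type*} (s : List α) (P E : α → Bool)
    (hEP : ∀ q ∈ s, E q = true → P q = true) (j k : ℕ) :
    s.countP (fun q => decide (j + (if P q then 1 else 0) = k + (if E q then 1 else 0)))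
      = if k = j + 1 then s.countP P - s.countP E
        else if k = j then s.length - (s.countP P - s.countP E) else 0 := by
  have hd := countP_diff P E s hEP
  by_cases h1 : k = j + 1
  · rw [if_pos h1]
    have : s.countP (fun q =>
        decide (j + (if P q then 1 else 0) = k + (if E q then 1 else 0)))
        = s.countP (fun q => P q && !E q) := by
      apply List.countP_congr
      intro q hq
      have := hEP q hq
      cases hP : P q <;> cases hE : E q <;> simp_all <;> omega
    rw [this]; omega
  · rw [if_neg h1]
    by_cases h2 : k = j
    · rw [if_pos h2]
      have : s.countP (fun q =>
          decide (j + (if P q then 1 else 0) = k + (if E q then 1 else 0)))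
          = s.countP (fun q => !(P q && !E q)) := by
        apply List.countP_congr
        intro q hq
        have := hEP q hq
        cases hP : P q <;> cases hE : E q <;> simp_all <;> omega
      rw [this, countP_not]
      omega
    · rw [if_neg h2]
      rw [List.countP_eq_zero]
      intro q hq
      have := hEP q hq
      cases hP : P q <;> cases hE : E q <;> simp_all <;> omega

theorem shape0 {α : Type*} (s : List α) (E : α → Bool) (j k : ℕ) :
    s.countP (fun q => decide (j = k + (if E q then 1 else 0)))
      = if k = j then s.length - s.countP E
        else if k + 1 = j then s.countP E else 0 := by
  have hE : s.countP E ≤ s.length := List.countP_le_length (p := E)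
  by_cases h1 : k = j
  · rw [if_pos h1]
    have : s.countP (fun q => decide (j = k + (if E q then 1 else 0)))
        = s.countP (fun q => !E q) := by
      apply List.countP_congr
      intro q hq
      cases hE : E q <;> simp_all <;> omega
    rw [this, countP_not]
  · rw [if_neg h1]
    by_cases h2 : k + 1 = j
    · rw [if_pos h2]
      apply List.countP_congr
      intro q hq
      cases hE : E q <;> simp_all <;> omega
    · rw [if_neg h2, List.countP_eq_zero]
      intro q hq
      cases hE : E q <;> simp_all <;> omega


noncomputable def bmem (S : Set ℕ) (a : ℕ) : Bool :=
  @decide (a ∈ S) (Classical.propDecidable _)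

@[simp] theorem bmem_iff {S : Set ℕ} {a : ℕ} : bmem S a = true ↔ a ∈ S := by
  simp [bmem]

theorem bmem_zero {S : Set ℕ} (hS : 0 ∉ S) : bmem S 0 = false := by
  simp [bmem, hS]

noncomputable def fdes (X Y : Set ℕ) (q : ℕ × ℕ) : Bool :=
  decide (q.2 < q.1) && bmem X q.1 && bmem Y q.2

noncomputable def fadj (X Y : Set ℕ) (q : ℕ × ℕ) : Bool := bmem X q.1 && bmem Y q.2

theorem cnt_eq_countP (S : Set ℕ) (n : ℕ) :
    cnt S n = (List.range' 1 n).countP (bmem S) := by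
  classical
  have hnd : (List.range' 1 n).Nodup := (List.nodup_range' (s := 1) (n := n))
  have hnd2 : ((List.range' 1 n).filter (bmem S)).Nodup := hnd.filter _
  have hset : (↑(((List.range' 1 n).filter (bmem S)).toFinset) : Set ℕ)
      = S ∩ Set.Icc 1 n := by
    ext x
    simp only [List.coe_toFinset, Set.mem_setOf_eq, List.mem_filter, List.mem_range'_1,
      bmem_iff, Set.mem_inter_iff, Set.mem_Icc]
    constructor
    · rintro ⟨⟨h1, h2⟩, h3⟩; exact ⟨h3, h1, by omega⟩
    · rintro ⟨h3, h1, h2⟩; exact ⟨⟨h1, by omega⟩, h3⟩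
  rw [cnt, ← hset, Set.ncard_coe_finset, List.toFinset_card_of_nodup hnd2,
    List.countP_eq_length_filter]

theorem countP_perm_cnt {S : Set ℕ} {n : ℕ} {l : List ℕ} (hl : l.Perm (List.range' 1 n)) :
    l.countP (bmem S) = cnt S n := by
  rw [cnt_eq_countP]; exact hl.countP_eq _

theorem zext_mem_lt {n : ℕ} {l : List ℕ} (hl : l.Perm (List.range' 1 n))
    {q : ℕ × ℕ} (hq : q ∈ zext l) : q.1 < n + 1 ∧ q.2 < n + 1 := by
  have hmem : ∀ a ∈ l, a < n + 1 := by
    intro a ha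
    have := (hl.mem_iff).mp ha
    rw [List.mem_range'_1] at this
    omega
  obtain ⟨q1, q2⟩ := q
  have h := List.of_mem_zip hq
  constructor
  · rcases List.mem_cons.mp h.1 with h1 | h1
    · omega
    · exact hmem _ h1
  · rcases List.mem_append.mp h.2 with h2 | h2
    · exact hmem _ h2
    · simp at h2; omega

theorem countP_zext_snd (S : Set ℕ) (hS : 0 ∉ S) (l : List ℕ) :
    (zext l).countP (fun q => bmem S q.2) = l.countP (bmem S) := by
  have hmap : (zext l).map Prod.snd = l ++ [0] :=
    List.map_snd_zip (by simp)
  have : (zext l).countP (fun q => bmem S q.2)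
      = ((zext l).map Prod.snd).countP (bmem S) := by
    rw [List.countP_map]; rfl
  rw [this, hmap, List.countP_append]
  simp [bmem_zero hS]

theorem countP_zext_fst (S : Set ℕ) (hS : 0 ∉ S) (l : List ℕ) :
    (zext l).countP (fun q => bmem S q.1) = l.countP (bmem S) := by
  have hmap : (zext l).map Prod.fst = 0 :: l :=
    List.map_fst_zip (by simp)
  have : (zext l).countP (fun q => bmem S q.1)
      = ((zext l).map Prod.fst).countP (bmem S) := by
    rw [List.countP_map]; rfl
  rw [this, hmap, List.countP_cons]
  simp [bmem_zero hS]

/-- the common recursion coefficient -/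
noncomputable def stepCoef (inA : Bool) (N b j k : ℕ) : ℕ :=
  if inA then (if k = j + 1 then b - j else if k = j then N - (b - j) else 0)
  else (if k = j then N - j else if k + 1 = j then j else 0)

theorem step_des (A' Bs : Set ℕ) (hB0 : 0 ∉ Bs) {n : ℕ} {l : List ℕ}
    (hl : l.Perm (List.range' 1 n)) (k : ℕ) :
    (List.range (l.length + 1)).countP
        (fun p => dstat (fdes A' Bs) (l.insertIdx p (n + 1)) = k)
      = stepCoef (bmem A' (n + 1)) (l.length + 1) (cnt Bs n)
          (dstat (fdes A' Bs) l) k := by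
  set f := fdes A' Bs with hf
  have hf0 : ∀ a, f (a, 0) = false := by
    intro a; simp [hf, fdes, bmem_zero hB0]
  have h0f : ∀ b, f (0, b) = false := by
    intro b; simp [hf, fdes]
  rw [slot_count f hf0 h0f]
  set j := dstat f l with hj
  have hjz : (zext l).countP f = j := countP_zext f hf0 h0f l
  have hBz : (zext l).countP (fun q => bmem Bs q.2) = cnt Bs n := by
    rw [countP_zext_snd Bs hB0 l, countP_perm_cnt hl]
  have hEP : ∀ q ∈ zext l, f q = true → bmem Bs q.2 = true := by
    intro q _ hq
    simp only [hf, fdes, Bool.and_eq_true] at hq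
    exact hq.2
  by_cases hA : bmem A' (n + 1) = true
  · have key : (zext l).countP (fun q =>
        decide (j + (if f (q.1, n + 1) then 1 else 0) + (if f (n + 1, q.2) then 1 else 0)
          = k + (if f q then 1 else 0)))
        = (zext l).countP (fun q =>
          decide (j + (if bmem Bs q.2 then 1 else 0) = k + (if f q then 1 else 0))) := by
      apply List.countP_congr
      intro q hq
      have hlt := zext_mem_lt hl hq
      have h1 : f (q.1, n + 1) = false := by
        have : ¬ ((n : ℕ) + 1 < q.1) := by omega
        simp [hf, fdes, this]
      have h2 : f (n + 1, q.2) = bmem Bs q.2 := by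
        have : q.2 < n + 1 := hlt.2
        simp [hf, fdes, this, hA]
      rw [h1, h2]
      simp
    rw [key, shape1 (zext l) _ f hEP j k, hjz, hBz, zext_length, stepCoef, if_pos hA]
  · have hA' : bmem A' (n + 1) = false := by simp only [Bool.not_eq_true] at hA; exact hA
    have key : (zext l).countP (fun q =>
        decide (j + (if f (q.1, n + 1) then 1 else 0) + (if f (n + 1, q.2) then 1 else 0)
          = k + (if f q then 1 else 0)))
        = (zext l).countP (fun q => decide (j = k + (if f q then 1 else 0))) := by
      apply List.countP_congr
      intro q hq
      have hlt := zext_mem_lt hl hq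
      have h1 : f (q.1, n + 1) = false := by
        have : ¬ ((n : ℕ) + 1 < q.1) := by omega
        simp [hf, fdes, this]
      have h2 : f (n + 1, q.2) = false := by
        simp [hf, fdes, hA']
      rw [h1, h2]
      simp
    rw [key, shape0 (zext l) f j k, hjz, zext_length, stepCoef, if_neg hA]


theorem step_adj (X Y B : Set ℕ) (hX : 0 ∉ X) (hY : 0 ∉ Y) {n : ℕ} {l : List ℕ}
    (hl : l.Perm (List.range' 1 n))
    (hc1 : n + 1 ∈ X ∩ Y → cnt B n = cnt X n + cnt Y n)
    (hc2 : n + 1 ∈ X \ Y → cnt B n = cnt Y n)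
    (hc3 : n + 1 ∈ Y \ X → cnt B n = cnt X n) (k : ℕ) :
    (List.range (l.length + 1)).countP
        (fun p => dstat (fadj X Y) (l.insertIdx p (n + 1)) = k)
      = stepCoef (bmem (X ∪ Y) (n + 1)) (l.length + 1) (cnt B n)
          (dstat (fadj X Y) l) k := by
  set f := fadj X Y with hf
  have hf0 : ∀ a, f (a, 0) = false := by intro a; simp [hf, fadj, bmem_zero hY]
  have h0f : ∀ b, f (0, b) = false := by intro b; simp [hf, fadj, bmem_zero hX]
  rw [slot_count f hf0 h0f]
  set j := dstat f l with hj
  have hjz : (zext l).countP f = j := countP_zext f hf0 h0f l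
  have hXz : (zext l).countP (fun q => bmem X q.1) = cnt X n := by
    rw [countP_zext_fst X hX l, countP_perm_cnt hl]
  have hYz : (zext l).countP (fun q => bmem Y q.2) = cnt Y n := by
    rw [countP_zext_snd Y hY l, countP_perm_cnt hl]
  have hjlen : j ≤ l.length + 1 := by
    rw [← hjz, ← zext_length l]; exact List.countP_le_length (p := f)
  cases hx : bmem X (n + 1) <;> cases hy : bmem Y (n + 1)
  · -- n+1 ∉ X, n+1 ∉ Y
    have hA : bmem (X ∪ Y) (n + 1) = false := by
      rw [← Bool.not_eq_true, bmem_iff]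
      rintro (h | h)
      · rw [bmem_iff.mpr h] at hx; exact Bool.false_ne_true hx.symm
      · rw [bmem_iff.mpr h] at hy; exact Bool.false_ne_true hy.symm
    have key : (zext l).countP (fun q =>
        decide (j + (if f (q.1, n + 1) then 1 else 0) + (if f (n + 1, q.2) then 1 else 0)
          = k + (if f q then 1 else 0)))
        = (zext l).countP (fun q => decide (j = k + (if f q then 1 else 0))) := by
      apply List.countP_congr
      intro q hq
      cases hu : bmem X q.1 <;> cases hv : bmem Y q.2 <;>
        simp [hf, fadj, hx, hy, hu, hv] <;> omega
    rw [key, shape0 (zext l) f j k, hjz, zext_length, stepCoef, hA]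
    simp
  · -- n+1 ∈ Y \ X
    have hmem : n + 1 ∈ Y \ X := by
      refine ⟨bmem_iff.mp hy, fun h => ?_⟩
      rw [bmem_iff.mpr h] at hx; exact Bool.false_ne_true hx.symm
    have hb : cnt B n = cnt X n := hc3 hmem
    have hA : bmem (X ∪ Y) (n + 1) = true := bmem_iff.mpr (Or.inr hmem.1)
    have key : (zext l).countP (fun q =>
        decide (j + (if f (q.1, n + 1) then 1 else 0) + (if f (n + 1, q.2) then 1 else 0)
          = k + (if f q then 1 else 0)))
        = (zext l).countP (fun q =>
            decide (j + (if bmem X q.1 then 1 else 0) = k + (if f q then 1 else 0))) := by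
      apply List.countP_congr
      intro q hq
      cases hu : bmem X q.1 <;> cases hv : bmem Y q.2 <;>
        simp [hf, fadj, hx, hy, hu, hv] <;> omega
    have hEP : ∀ q ∈ zext l, f q = true → bmem X q.1 = true := by
      intro q _ hq
      simp only [hf, fadj, Bool.and_eq_true] at hq
      exact hq.1
    rw [key, shape1 (zext l) _ f hEP j k, hjz, hXz, zext_length, stepCoef, if_pos hA, ← hb]
  · -- n+1 ∈ X \ Y
    have hmem : n + 1 ∈ X \ Y := by
      refine ⟨bmem_iff.mp hx, fun h => ?_⟩
      rw [bmem_iff.mpr h] at hy; exact Bool.false_ne_true hy.symm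
    have hb : cnt B n = cnt Y n := hc2 hmem
    have hA : bmem (X ∪ Y) (n + 1) = true := bmem_iff.mpr (Or.inl hmem.1)
    have key : (zext l).countP (fun q =>
        decide (j + (if f (q.1, n + 1) then 1 else 0) + (if f (n + 1, q.2) then 1 else 0)
          = k + (if f q then 1 else 0)))
        = (zext l).countP (fun q =>
            decide (j + (if bmem Y q.2 then 1 else 0) = k + (if f q then 1 else 0))) := by
      apply List.countP_congr
      intro q hq
      cases hu : bmem X q.1 <;> cases hv : bmem Y q.2 <;>
        simp [hf, fadj, hx, hy, hu, hv] <;> omega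
    have hEP : ∀ q ∈ zext l, f q = true → bmem Y q.2 = true := by
      intro q _ hq
      simp only [hf, fadj, Bool.and_eq_true] at hq
      exact hq.2
    rw [key, shape1 (zext l) _ f hEP j k, hjz, hYz, zext_length, stepCoef, if_pos hA, ← hb]
  · -- n+1 ∈ X ∩ Y
    have hmem : n + 1 ∈ X ∩ Y := ⟨bmem_iff.mp hx, bmem_iff.mp hy⟩
    have hb : cnt B n = cnt X n + cnt Y n := hc1 hmem
    have hA : bmem (X ∪ Y) (n + 1) = true := bmem_iff.mpr (Or.inl hmem.1)
    have key : (zext l).countP (fun q =>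
        decide (j + (if f (q.1, n + 1) then 1 else 0) + (if f (n + 1, q.2) then 1 else 0)
          = k + (if f q then 1 else 0)))
        = (zext l).countP (fun q =>
            decide (j + (if (bmem X q.1 || bmem Y q.2) then 1 else 0)
              = k + (if (false : Bool) then 1 else 0))) := by
      apply List.countP_congr
      intro q hq
      cases hu : bmem X q.1 <;> cases hv : bmem Y q.2 <;>
        simp [hf, fadj, hx, hy, hu, hv] <;> omega
    have hincl : (zext l).countP (fun q => bmem X q.1 || bmem Y q.2) + j
        = cnt X n + cnt Y n := by
      have h := countP_inclexcl (fun q => bmem X q.1) (fun q => bmem Y q.2) (zext l)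
      rw [hXz, hYz] at h
      have h2 : (zext l).countP (fun q => bmem X q.1 && bmem Y q.2) = j := hjz
      rw [h2] at h
      exact h
    have hsh := shape1 (zext l) (fun q => bmem X q.1 || bmem Y q.2)
      (fun _ => (false : Bool)) (fun q _ h => by simp at h) j k
    rw [key, hsh, zext_length, stepCoef, if_pos hA]
    have hz : (zext l).countP (fun _ : ℕ × ℕ => (false : Bool)) = 0 := by simp
    rw [hz]
    split_ifs <;> omega


theorem insertIdx_inj_idx {α : Type*} {m : α} {l : List α} (hm : m ∉ l) {p q : ℕ}
    (hp : p ≤ l.length) (hq : q ≤ l.length)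
    (h : l.insertIdx p m = l.insertIdx q m) : p = q := by
  rcases lt_trichotomy p q with h1 | h1 | h1
  · exfalso
    have hplen : p < l.length := by omega
    have e1 : (l.insertIdx p m)[p]'(by rw [List.length_insertIdx_of_le_length hp]; omega) = m :=
      List.getElem_insertIdx_self _
    have e2 : (l.insertIdx q m)[p]'(by rw [List.length_insertIdx_of_le_length hq]; omega) = l[p] :=
      List.getElem_insertIdx_of_lt h1 _
    have e3 := (List.getElem_of_eq h (i := p)
      (by rw [List.length_insertIdx_of_le_length hp]; omega)).symm.trans e1
    have : l[p] = m := e2.symm.trans e3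
    exact hm (this ▸ List.getElem_mem hplen)
  · exact h1
  · exfalso
    have hqlen : q < l.length := by omega
    have e1 : (l.insertIdx q m)[q]'(by rw [List.length_insertIdx_of_le_length hq]; omega) = m :=
      List.getElem_insertIdx_self _
    have e2 : (l.insertIdx p m)[q]'(by rw [List.length_insertIdx_of_le_length hp]; omega) = l[q] :=
      List.getElem_insertIdx_of_lt h1 _
    have e3 := (List.getElem_of_eq h.symm (i := q)
      (by rw [List.length_insertIdx_of_le_length hq]; omega)).symm.trans e1
    have : l[q] = m := e2.symm.trans e3
    exact hm (this ▸ List.getElem_mem hqlen)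

theorem insertIdx_getElem_eraseIdx {α : Type*} :
    ∀ (z : List α) (p : ℕ) (h : p < z.length), (z.eraseIdx p).insertIdx p z[p] = z := by
  intro z
  induction z with
  | nil => intro p h; simp at h
  | cons a t ih =>
      intro p h
      match p with
      | 0 => simp
      | (q+1) =>
          have hq : q < t.length := by simpa using h
          simp only [List.eraseIdx_cons_succ, List.getElem_cons_succ,
            List.insertIdx_succ_cons]
          rw [ih q hq]

theorem mem_lt_of_perm_range' {n : ℕ} {l : List ℕ} (hl : l.Perm (List.range' 1 n)) :
    (n + 1) ∉ l := by
  intro h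
  have := hl.mem_iff.mp h
  rw [List.mem_range'_1] at this
  omega

theorem perms_flatMap (n : ℕ) :
    ((List.range' 1 (n + 1)).permutations).Perm
      (((List.range' 1 n).permutations).flatMap
        (fun l => (List.range (n + 1)).map (fun p => l.insertIdx p (n + 1)))) := by
  have hlen : ∀ {l : List ℕ}, l.Perm (List.range' 1 n) → l.length = n := by
    intro l hl
    rw [hl.length_eq, List.length_range']
  have hL : ((List.range' 1 (n + 1)).permutations).Nodup :=
    List.nodup_permutations _ ((List.nodup_range' (s := 1) (n := n + 1)))
  have hR : (((List.range' 1 n).permutations).flatMap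
      (fun l => (List.range (n + 1)).map (fun p => l.insertIdx p (n + 1)))).Nodup := by
    rw [List.nodup_flatMap]
    constructor
    · intro l hl
      rw [List.mem_permutations] at hl
      apply List.Nodup.map_on
      · intro p hp q hq h
        rw [List.mem_range] at hp hq
        exact insertIdx_inj_idx (mem_lt_of_perm_range' hl)
          (by rw [hlen hl]; omega) (by rw [hlen hl]; omega) h
      · exact List.nodup_range (n := n + 1)
    · have hnd : ((List.range' 1 n).permutations).Nodup :=
        List.nodup_permutations _ ((List.nodup_range' (s := 1) (n := n)))
      refine List.Pairwise.imp_of_mem ?_ hnd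
      intro l₁ l₂ hl₁ hl₂ hne z hz1 hz2
      rw [List.mem_permutations] at hl₁ hl₂
      rw [List.mem_map] at hz1 hz2
      obtain ⟨p, hp, rfl⟩ := hz1
      obtain ⟨q, hq, he⟩ := hz2
      rw [List.mem_range] at hp hq
      -- the inserted value n+1 sits at position p and q; nodup forces p = q
      have hz : (l₁.insertIdx p (n + 1)).Perm ((n + 1) :: l₁) :=
        List.perm_insertIdx _ _ (by rw [hlen hl₁]; omega)
      have hznd : (l₁.insertIdx p (n + 1)).Nodup := by
        refine hz.nodup_iff.mpr ?_
        exact List.nodup_cons.mpr ⟨mem_lt_of_perm_range' hl₁, hl₁.nodup_iff.mpr ((List.nodup_range' (s := 1) (n := n)))⟩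
      have hplen : p < (l₁.insertIdx p (n + 1)).length := by
        rw [List.length_insertIdx_of_le_length (by rw [hlen hl₁]; omega), hlen hl₁]; omega
      have hqlen : q < (l₁.insertIdx p (n + 1)).length := by
        rw [List.length_insertIdx_of_le_length (by rw [hlen hl₁]; omega), hlen hl₁]; omega
      have e1 : (l₁.insertIdx p (n + 1))[p]'hplen = (n + 1) :=
        List.getElem_insertIdx_self hplen
      have e2 : (l₁.insertIdx p (n + 1))[q]'hqlen = (n + 1) := by
        have hq2 : q < (l₂.insertIdx q (n + 1)).length := by
          rw [List.length_insertIdx_of_le_length (by rw [hlen hl₂]; omega), hlen hl₂]; omega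
        have := (List.getElem_of_eq he hq2).symm.trans
          (List.getElem_insertIdx_self hq2)
        exact this
      have hpq : p = q := by
        have := List.Nodup.getElem_inj_iff hznd (hi := hplen) (hj := hqlen)
        exact this.mp (e1.trans e2.symm)
      subst hpq
      have : l₁ = l₂ := by
        have h1 := List.eraseIdx_insertIdx_self (i := p) (l := l₁) (n + 1)
        have h2 := List.eraseIdx_insertIdx_self (i := p) (l := l₂) (n + 1)
        rw [← h1, ← h2, he]
      exact hne this
  rw [List.perm_ext_iff_of_nodup hL hR]
  intro z
  rw [List.mem_permutations, List.mem_flatMap]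
  constructor
  · intro hz
    have hmem : (n + 1) ∈ z := by
      rw [hz.mem_iff, List.mem_range'_1]; omega
    obtain ⟨⟨p, hplt⟩, hp⟩ := List.mem_iff_get.mp hmem
    refine ⟨z.eraseIdx p, ?_, ?_⟩
    · rw [List.mem_permutations]
      have hz2 : z.Perm (List.range' 1 n ++ [n + 1]) := by
        have : List.range' 1 (n + 1) = List.range' 1 n ++ [1 + 1 * n] := List.range'_concat (s := 1) (n := n)
        rw [this] at hz
        simpa [Nat.add_comm] using hz
      have hz3 : z.Perm ((n + 1) :: List.range' 1 n) :=
        hz2.trans (List.perm_append_singleton _ _)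
      have hz4 : ((n + 1) :: z.eraseIdx p).Perm ((n + 1) :: List.range' 1 n) := by
        refine List.Perm.trans ?_ hz3
        have : (z.eraseIdx p).insertIdx p z[p] = z := insertIdx_getElem_eraseIdx z p hplt
        have hins : ((z.eraseIdx p).insertIdx p z[p]).Perm (z[p] :: z.eraseIdx p) :=
          List.perm_insertIdx _ _ (by rw [List.length_eraseIdx_of_lt hplt]; omega)
      
        rw [this] at hins
        have hgp : z[p] = n + 1 := by simpa [List.get_eq_getElem] using hp
        rw [hgp] at hins
        exact hins.symm
      exact hz4.cons_inv
    · rw [List.mem_map]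
      refine ⟨p, ?_, ?_⟩
      · rw [List.mem_range]
        have : z.length = n + 1 := by rw [hz.length_eq, List.length_range']
        omega
      · have hgp : z[p] = n + 1 := by simpa [List.get_eq_getElem] using hp
        rw [← hgp]
        exact insertIdx_getElem_eraseIdx z p hplt
  · rintro ⟨l, hl, hz⟩
    rw [List.mem_permutations] at hl
    rw [List.mem_map] at hz
    obtain ⟨p, hp, rfl⟩ := hz
    rw [List.mem_range] at hp
    have hins : (l.insertIdx p (n + 1)).Perm ((n + 1) :: l) :=
      List.perm_insertIdx _ _ (by rw [hlen hl]; omega)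
    refine hins.trans ?_
    have : List.range' 1 (n + 1) = List.range' 1 n ++ [1 + 1 * n] := List.range'_concat (s := 1) (n := n)
    rw [this]
    refine List.Perm.trans ?_ (List.perm_append_singleton _ _).symm
    have : 1 + 1 * n = n + 1 := by omega
    rw [this]
    exact hl.cons _


theorem sum_map_eq_sum_countP {α : Type*} (L : List α) (g : α → ℕ) (C : ℕ → ℕ) (N : ℕ)
    (hb : ∀ a ∈ L, g a < N) :
    (L.map (fun a => C (g a))).sum
      = ∑ j ∈ Finset.range N, (L.countP (fun a => g a = j)) * C j := by
  induction L with
  | nil => simp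
  | cons a t ih =>
      have ha := hb a (List.mem_cons_self)
      have ih' := ih (fun x hx => hb x (List.mem_cons_of_mem a hx))
      simp only [List.map_cons, List.sum_cons]
      rw [ih']
      have h1 : ∀ j ∈ Finset.range N,
          ((a :: t).countP (fun x => decide (g x = j))) * C j
            = (t.countP (fun x => decide (g x = j))) * C j
              + (if g a = j then C j else 0) := by
        intro j _
        rw [List.countP_cons]
        by_cases h : g a = j <;> simp [h, Nat.add_mul]
      rw [Finset.sum_congr rfl h1, Finset.sum_add_distrib,
        Finset.sum_ite_eq (Finset.range N) (g a) C,
        if_pos (Finset.mem_range.mpr ha)]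
      omega

theorem dstat_lt {f : ℕ × ℕ → Bool} {n : ℕ} {l : List ℕ}
    (hl : l.Perm (List.range' 1 n)) : dstat f l < n + 1 := by
  have h1 : dstat f l ≤ (l.zip l.tail).length := List.countP_le_length (p := f)
  have h2 : (l.zip l.tail).length ≤ l.length := by
    rw [List.length_zip]; omega
  have h3 : l.length = n := by rw [hl.length_eq, List.length_range']
  omega

theorem word_main (X Y B : Set ℕ) (hX : 0 ∉ X) (hY : 0 ∉ Y) (hB : 0 ∉ B)
    (hcond : ∀ n : ℕ, 1 ≤ n →
      (n + 1 ∈ X ∩ Y → cnt B n = cnt X n + cnt Y n) ∧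
      (n + 1 ∈ X \ Y → cnt B n = cnt Y n) ∧
      (n + 1 ∈ Y \ X → cnt B n = cnt X n))
    (n : ℕ) (hn : 1 ≤ n) :
    ∀ k, ((List.range' 1 n).permutations).countP (fun l => dstat (fdes (X ∪ Y) B) l = k)
      = ((List.range' 1 n).permutations).countP (fun l => dstat (fadj X Y) l = k) := by
  induction n, hn using Nat.le_induction with
  | base =>
      intro k
      apply List.countP_congr
      intro l hl
      rw [List.mem_permutations] at hl
      have hl1 : l = [1] := by
        rw [show List.range' 1 1 = [1] from rfl] at hl
        exact List.perm_singleton.mp hl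
      subst hl1
      simp [dstat]
  | succ n hn ih =>
      intro k
      have hside : ∀ (f : ℕ × ℕ → Bool),
          (∀ l : List ℕ, l.Perm (List.range' 1 n) → ∀ k',
            (List.range (l.length + 1)).countP
              (fun p => dstat f (l.insertIdx p (n + 1)) = k')
            = stepCoef (bmem (X ∪ Y) (n + 1)) (l.length + 1) (cnt B n) (dstat f l) k') →
          ((List.range' 1 (n + 1)).permutations).countP (fun l => dstat f l = k)
            = ∑ j ∈ Finset.range (n + 1),
                (((List.range' 1 n).permutations).countP (fun l => dstat f l = j))
                  * stepCoef (bmem (X ∪ Y) (n + 1)) (n + 1) (cnt B n) j k := by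
        intro f hstep
        rw [((perms_flatMap n).countP_eq _), List.countP_flatMap]
        have hmapeq : ((List.range' 1 n).permutations).map
              ((List.countP (fun l => decide (dstat f l = k)))
                ∘ (fun l => (List.range (n + 1)).map (fun p => l.insertIdx p (n + 1))))
            = ((List.range' 1 n).permutations).map
              (fun l => stepCoef (bmem (X ∪ Y) (n + 1)) (n + 1) (cnt B n) (dstat f l) k) := by
          apply List.map_congr_left
          intro l hl
          rw [List.mem_permutations] at hl
          have hlen : l.length = n := by rw [hl.length_eq, List.length_range']
          have : ((List.countP (fun l => decide (dstat f l = k)))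
              ∘ (fun l => (List.range (n + 1)).map (fun p => l.insertIdx p (n + 1)))) l
              = (List.range (l.length + 1)).countP
                  (fun p => dstat f (l.insertIdx p (n + 1)) = k) := by
            simp only [Function.comp_apply, List.countP_map, hlen]
            rfl
          rw [this, hstep l hl k, hlen]
        rw [hmapeq]
        have := sum_map_eq_sum_countP ((List.range' 1 n).permutations) (dstat f)
          (fun j => stepCoef (bmem (X ∪ Y) (n + 1)) (n + 1) (cnt B n) j k) (n + 1)
          (fun l hl => dstat_lt (List.mem_permutations.mp hl))
        exact this
      obtain ⟨hc1, hc2, hc3⟩ := hcond n hn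
      rw [hside (fdes (X ∪ Y) B) (fun l hl k' => step_des (X ∪ Y) B hB hl k'),
        hside (fadj X Y) (fun l hl k' => step_adj X Y B hX hY hl hc1 hc2 hc3 k')]
      exact Finset.sum_congr rfl (fun j _ => by rw [ih j])


/-- the word of a permutation -/
def word (n : ℕ) (σ : Equiv.Perm (Fin n)) : List ℕ :=
  List.ofFn (fun i => (σ i : ℕ) + 1)

theorem word_length (n : ℕ) (σ : Equiv.Perm (Fin n)) : (word n σ).length = n :=
  List.length_ofFn

theorem word_getElem (n : ℕ) (σ : Equiv.Perm (Fin n)) (p : ℕ) (h : p < (word n σ).length) :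
    (word n σ)[p] = (σ ⟨p, by simpa [word_length] using h⟩ : ℕ) + 1 := by
  simp only [word, List.getElem_ofFn]

theorem word_perm (n : ℕ) (σ : Equiv.Perm (Fin n)) :
    (word n σ).Perm (List.range' 1 n) := by
  rw [List.perm_ext_iff_of_nodup ?_ ((List.nodup_range' (s := 1) (n := n)))]
  · intro a
    rw [word, List.mem_ofFn, List.mem_range'_1]
    constructor
    · rintro ⟨i, rfl⟩
      have := (σ i).isLt
      show 1 ≤ (σ i : ℕ) + 1 ∧ (σ i : ℕ) + 1 < 1 + n
      omega
    · rintro ⟨h1, h2⟩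
      refine ⟨σ.symm ⟨a - 1, by omega⟩, ?_⟩
      simp only [Equiv.apply_symm_apply]
      omega
  · rw [word, List.nodup_ofFn]
    intro i j h
    simp only at h
    have : σ i = σ j := Fin.ext (by omega)
    exact σ.injective this

theorem word_inj (n : ℕ) {σ τ : Equiv.Perm (Fin n)} (h : word n σ = word n τ) : σ = τ := by
  rw [word, word, List.ofFn_inj] at h
  ext i
  have := congrFun h i
  omega

theorem word_surj (n : ℕ) {l : List ℕ} (hl : l.Perm (List.range' 1 n)) :
    ∃ σ : Equiv.Perm (Fin n), word n σ = l := by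
  have hlen : l.length = n := by rw [hl.length_eq, List.length_range']
  have hnd : l.Nodup := hl.nodup_iff.mpr ((List.nodup_range' (s := 1) (n := n)))
  have hmem : ∀ (p : ℕ) (hp : p < l.length), 1 ≤ l[p] ∧ l[p] < 1 + n := by
    intro p hp
    have : l[p] ∈ List.range' 1 n := hl.mem_iff.mp (List.getElem_mem hp)
    exact List.mem_range'_1.mp this
  have hf : ∀ i : Fin n, l[(i : ℕ)]'(by omega) - 1 < n := by
    intro i
    have := hmem i (by omega)
    omega
  set f : Fin n → Fin n := fun i => ⟨l[(i : ℕ)]'(by omega) - 1, hf i⟩ with hfdef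
  have hinj : Function.Injective f := by
    intro i j h
    simp only [hfdef, Fin.mk.injEq] at h
    have hi := hmem i (by omega)
    have hj := hmem j (by omega)
    have : l[(i : ℕ)]'(by omega) = l[(j : ℕ)]'(by omega) := by omega
    have := (hnd.getElem_inj_iff).mp this
    exact Fin.ext this
  refine ⟨Equiv.ofBijective f (Finite.injective_iff_bijective.mp hinj), ?_⟩
  apply List.ext_getElem (by rw [word_length, hlen])
  intro p h1 h2
  rw [word_getElem]
  have := hmem p (by omega)
  simp only [Equiv.ofBijective_apply, hfdef]
  omega

theorem ncard_subtype (n : ℕ) (P : ℕ → Prop) [DecidablePred P] :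
    {i : Fin n | P i.val}.ncard = ((Finset.range n).filter P).card := by
  classical
  rw [Set.ncard_eq_toFinset_card _ (Set.toFinite _)]
  apply Finset.card_bij (fun (i : Fin n) _ => (i : ℕ))
  · intro i hi
    rw [Set.Finite.mem_toFinset] at hi
    simp only [Finset.mem_filter, Finset.mem_range]
    exact ⟨i.isLt, hi⟩
  · intro i _ j _ h
    exact Fin.ext h
  · intro p hp
    simp only [Finset.mem_filter, Finset.mem_range] at hp
    exact ⟨⟨p, hp.1⟩, by rw [Set.Finite.mem_toFinset]; exact hp.2, rfl⟩

theorem countP_list_range (m : ℕ) (q : ℕ → Bool) :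
    (List.range m).countP q = ((Finset.range m).filter (fun p => q p = true)).card := by
  induction m with
  | zero => simp
  | succ m ih =>
      rw [List.range_succ, List.countP_append, Finset.range_add_one,
        Finset.filter_insert]
      by_cases h : q m = true
      · rw [if_pos h, Finset.card_insert_of_notMem (by simp)]
        simp [h, ih]
      · rw [if_neg h]
        simp only [List.countP_cons, List.countP_nil]
        simp [h, ih]


theorem ncard_eq_dstat (n : ℕ) (σ : Equiv.Perm (Fin n)) (f : ℕ × ℕ → Bool)
    (R : Fin n → Fin n → Prop)
    (hfR : ∀ a b : Fin n, (f ((a : ℕ) + 1, (b : ℕ) + 1) = true) ↔ R a b) :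
    {i : Fin n | ∃ h : (i : ℕ) + 1 < n, R (σ i) (σ ⟨(i : ℕ) + 1, h⟩)}.ncard
      = dstat f (word n σ) := by
  classical
  set w := word n σ with hw
  have hwl : w.length = n := word_length n σ
  have hzl : (w.zip w.tail).length = n - 1 := by
    rw [List.length_zip, List.length_tail, hwl]; omega
  set P : ℕ → Prop := fun p => ∃ h : p + 1 < n,
    R (σ ⟨p, Nat.lt_of_succ_lt h⟩) (σ ⟨p + 1, h⟩) with hP
  have step1 : {i : Fin n | ∃ h : (i : ℕ) + 1 < n, R (σ i) (σ ⟨(i : ℕ) + 1, h⟩)}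
      = {i : Fin n | P i.val} := by
    ext i
    simp only [Set.mem_setOf_eq, hP, Fin.eta]
  rw [step1, ncard_subtype n P]
  have step3 : ((Finset.range n).filter P).card = ((Finset.range (n - 1)).filter P).card := by
    congr 1
    apply Finset.ext
    intro p
    simp only [Finset.mem_filter, Finset.mem_range]
    constructor
    · rintro ⟨h1, h2⟩
      refine ⟨?_, h2⟩
      obtain ⟨h, _⟩ := h2
      omega
    · rintro ⟨h1, h2⟩
      exact ⟨by omega, h2⟩
  rw [step3]
  have step4 : ((Finset.range (n - 1)).filter P).card
      = (List.range (n - 1)).countP (fun p => decide (P p)) := by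
    rw [countP_list_range (n - 1) (fun p => decide (P p))]
    congr 1
    apply Finset.filter_congr
    intro p _
    simp
  rw [step4]
  have step5 : (List.range (n - 1)).countP (fun p => decide (P p))
      = (List.range (n - 1)).countP (fun p => f ((w.zip w.tail).getD p (0, 0))) := by
    apply List.countP_congr
    intro p hp
    rw [List.mem_range] at hp
    have hp1 : p + 1 < n := by omega
    have hpz : p < (w.zip w.tail).length := by rw [hzl]; omega
    have e1 : (w.zip w.tail).getD p (0, 0)
        = ((σ ⟨p, by omega⟩ : ℕ) + 1, (σ ⟨p + 1, hp1⟩ : ℕ) + 1) := by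
      rw [List.getD_eq_getElem _ _ hpz, List.getElem_zip, List.getElem_tail]
      rw [word_getElem n σ p (by rw [word_length]; omega), word_getElem n σ (p + 1) (by rw [word_length]; omega)]
    rw [e1]
    simp only [decide_eq_true_eq, hP]
    rw [hfR]
    constructor
    · rintro ⟨h, hr⟩; exact hr
    · intro hr; exact ⟨hp1, hr⟩
  rw [step5, ← hzl, countP_index ((0, 0) : ℕ × ℕ) (fun q => f q) (w.zip w.tail)]
  rfl

theorem natcard_bridge (n : ℕ) (g : List ℕ → ℕ) (k : ℕ) :
    Nat.card {σ : Equiv.Perm (Fin n) | g (word n σ) = k}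
      = ((List.range' 1 n).permutations).countP (fun l => g l = k) := by
  classical
  rw [Nat.card_coe_set_eq, Set.ncard_eq_toFinset_card _ (Set.toFinite _),
    List.countP_eq_length_filter]
  have hnd : (((List.range' 1 n).permutations).filter (fun l => decide (g l = k))).Nodup :=
    (List.nodup_permutations _ ((List.nodup_range' (s := 1) (n := n)))).filter _
  rw [← List.toFinset_card_of_nodup hnd]
  apply Finset.card_bij (fun σ _ => word n σ)
  · intro σ hσ
    rw [Set.Finite.mem_toFinset] at hσ
    rw [List.mem_toFinset, List.mem_filter]
    exact ⟨List.mem_permutations.mpr (word_perm n σ), by simpa using hσ⟩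
  · intro σ _ τ _ h
    exact word_inj n h
  · intro l hl
    rw [List.mem_toFinset, List.mem_filter, List.mem_permutations] at hl
    obtain ⟨σ, rfl⟩ := word_surj n hl.1
    exact ⟨σ, by rw [Set.Finite.mem_toFinset]; simpa using hl.2, rfl⟩

theorem desCount_eq_dstat (X Y : Set ℕ) (n : ℕ) (σ : Equiv.Perm (Fin n)) :
    desCount X Y n σ = dstat (fdes X Y) (word n σ) := by
  rw [desCount]
  exact ncard_eq_dstat n σ (fdes X Y)
    (fun a b => (b : ℕ) < (a : ℕ) ∧ ((a : ℕ) + 1) ∈ X ∧ ((b : ℕ) + 1) ∈ Y)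
    (by
      intro a b
      simp only [fdes, Bool.and_eq_true, decide_eq_true_eq, bmem_iff]
      constructor
      · rintro ⟨⟨h1, h2⟩, h3⟩; exact ⟨by omega, h2, h3⟩
      · rintro ⟨h1, h2, h3⟩; exact ⟨⟨by omega, h2⟩, h3⟩)

theorem adjCount_eq_dstat (X Y : Set ℕ) (n : ℕ) (σ : Equiv.Perm (Fin n)) :
    adjCount X Y n σ = dstat (fadj X Y) (word n σ) := by
  rw [adjCount]
  exact ncard_eq_dstat n σ (fadj X Y)
    (fun a b => ((a : ℕ) + 1) ∈ X ∧ ((b : ℕ) + 1) ∈ Y)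
    (by
      intro a b
      simp only [fadj, Bool.and_eq_true, bmem_iff])


end AuxForDeqA

open List in
/-- Theorem 6: if `A = X ∪ Y` and `B` satisfies `b_n = x_n + y_n` if `n+1 ∈ X ∩ Y`,
`b_n = y_n` if `n+1 ∈ X - Y`, and `b_n = x_n` if `n+1 ∈ Y - X`, then
`D_{n,k}^{A,B} = A_{n,k}^{X,Y}`. -/
theorem D_eq_A (X Y B : Set ℕ) (hX : 0 ∉ X) (hY : 0 ∉ Y) (hB : 0 ∉ B)
    (hcond : ∀ n : ℕ, 1 ≤ n →
      (n + 1 ∈ X ∩ Y → cnt B n = cnt X n + cnt Y n) ∧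
      (n + 1 ∈ X \ Y → cnt B n = cnt Y n) ∧
      (n + 1 ∈ Y \ X → cnt B n = cnt X n))
    (n : ℕ) (hn : 1 ≤ n) (k : ℕ) :
    D (X ∪ Y) B n k = A X Y n k := by
  classical
  have hD : D (X ∪ Y) B n k
      = ((List.range' 1 n).permutations).countP
          (fun l => dstat (fdes (X ∪ Y) B) l = k) := by
    rw [D]
    have hset : {σ : Equiv.Perm (Fin n) | desCount (X ∪ Y) B n σ = k}
        = {σ : Equiv.Perm (Fin n) | dstat (fdes (X ∪ Y) B) (word n σ) = k} := by
      ext σ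
      simp only [Set.mem_setOf_eq, desCount_eq_dstat]
    rw [hset]
    exact natcard_bridge n _ k
  have hA : A X Y n k
      = ((List.range' 1 n).permutations).countP
          (fun l => dstat (fadj X Y) l = k) := by
    rw [A]
    have hset : {σ : Equiv.Perm (Fin n) | adjCount X Y n σ = k}
        = {σ : Equiv.Perm (Fin n) | dstat (fadj X Y) (word n σ) = k} := by
      ext σ
      simp only [Set.mem_setOf_eq, adjCount_eq_dstat]
    rw [hset]
    exact natcard_bridge n _ k
  rw [hD, hA]
  exact word_main X Y B hX hY hB hcond n hn k
end

section
/- For all subsets X, Y of the positive integers and all n ≥ 1 and k ≥ 0, the number of permutations of [n] with exactly k (X,Y)-descents equals the number of permutations of [n] with exactly k (Y,X)-excedances, i.e. D_{n,k}^{X,Y} = E_{n,k}^{Y,X}. -/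
/-- `exc_{X,Y}(σ)`: number of `i` with `σ_i > i`, `i ∈ X` and `σ_i ∈ Y`
(positions and values of `Fin n` are identified with `{1, ..., n}` via `i ↦ i + 1`). -/
noncomputable def excCount (X Y : Set ℕ) (n : ℕ) (σ : Equiv.Perm (Fin n)) : ℕ :=
  {i : Fin n | (i : ℕ) < (σ i : ℕ) ∧ ((i : ℕ) + 1) ∈ X ∧ ((σ i : ℕ) + 1) ∈ Y}.ncard

/-- `E_{n,k}^{X,Y}`: the number of permutations of `[n]` with exactly `k`
`(X,Y)`-excedances. -/
noncomputable def E (X Y : Set ℕ) (n k : ℕ) : ℕ :=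
  Nat.card {σ : Equiv.Perm (Fin n) | excCount X Y n σ = k}

namespace Foata

variable {n : ℕ}

/-- `i` is a left-to-right maximum position of the word `w`. -/
def isMax (w : Equiv.Perm (Fin n)) (i : Fin n) : Prop :=
  ∀ j : Fin n, j < i → w j < w i

instance (w : Equiv.Perm (Fin n)) : DecidablePred (isMax w) := fun i =>
  inferInstanceAs (Decidable (∀ j : Fin n, j < i → w j < w i))

/-- The position `≤ i` where `w` attains its maximum over `{0, ..., i}`. -/
noncomputable def prefMax (w : Equiv.Perm (Fin n)) (i : Fin n) : Fin n :=
  w.symm (((Finset.Iic i).image w).max'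
    ⟨w i, Finset.mem_image_of_mem _ (Finset.mem_Iic.mpr le_rfl)⟩)

lemma prefMax_le (w : Equiv.Perm (Fin n)) (i : Fin n) : prefMax w i ≤ i := by
  have h := Finset.max'_mem ((Finset.Iic i).image w)
    ⟨w i, Finset.mem_image_of_mem _ (Finset.mem_Iic.mpr le_rfl)⟩
  rw [Finset.mem_image] at h
  obtain ⟨j, hj, hjw⟩ := h
  rw [prefMax, ← hjw, Equiv.symm_apply_apply]
  exact Finset.mem_Iic.mp hj

lemma le_w_prefMax (w : Equiv.Perm (Fin n)) {i j : Fin n} (h : j ≤ i) :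
    w j ≤ w (prefMax w i) := by
  rw [prefMax, Equiv.apply_symm_apply]
  exact Finset.le_max' _ _ (Finset.mem_image_of_mem _ (Finset.mem_Iic.mpr h))

lemma isMax_prefMax (w : Equiv.Perm (Fin n)) (i : Fin n) : isMax w (prefMax w i) := by
  intro j hj
  have h1 : w j ≤ w (prefMax w i) := le_w_prefMax w (le_trans (le_of_lt hj) (prefMax_le w i))
  exact lt_of_le_of_ne h1 (fun he => absurd (w.injective he) (ne_of_lt hj))

/-- The block-wise shift underlying Foata's bijection. -/
noncomputable def fAux (w : Equiv.Perm (Fin n)) (i : Fin n) : Fin n :=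
  if h : (i : ℕ) + 1 < n then
    if isMax w ⟨(i : ℕ) + 1, h⟩ then prefMax w i else ⟨(i : ℕ) + 1, h⟩
  else prefMax w i

lemma blockEnd_aux (w : Equiv.Perm (Fin n)) {a b : Fin n} (hab : (a : ℕ) < (b : ℕ))
    (ha : ∀ h : (a : ℕ) + 1 < n, isMax w ⟨(a : ℕ) + 1, h⟩)
    (heq : prefMax w a = prefMax w b) : False := by
  have h1 : (a : ℕ) + 1 < n := lt_of_le_of_lt hab b.isLt
  have hM := ha h1
  have h2 : w ⟨(a : ℕ) + 1, h1⟩ ≤ w (prefMax w b) :=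
    le_w_prefMax w (by rw [Fin.le_def]; exact hab)
  have h3 : prefMax w a < (⟨(a : ℕ) + 1, h1⟩ : Fin n) := by
    rw [Fin.lt_def]
    exact Nat.lt_succ_of_le (Fin.le_def.mp (prefMax_le w a))
  have h4 := hM _ h3
  rw [heq] at h4
  exact absurd h2 (not_le.mpr h4)

lemma fAux_injective (w : Equiv.Perm (Fin n)) : Function.Injective (fAux w) := by
  have key : ∀ a : Fin n,
      (∃ h : (a : ℕ) + 1 < n, ¬ isMax w ⟨(a : ℕ) + 1, h⟩ ∧ fAux w a = ⟨(a : ℕ) + 1, h⟩) ∨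
      ((∀ h : (a : ℕ) + 1 < n, isMax w ⟨(a : ℕ) + 1, h⟩) ∧ fAux w a = prefMax w a) := by
    intro a
    unfold fAux
    split_ifs with h1 h2
    · exact Or.inr ⟨fun _ => h2, rfl⟩
    · exact Or.inl ⟨h1, h2, rfl⟩
    · exact Or.inr ⟨fun h => absurd h h1, rfl⟩
  intro a b hab
  rcases key a with ⟨ha1, ha2, ha3⟩ | ⟨ha1, ha2⟩ <;>
    rcases key b with ⟨hb1, hb2, hb3⟩ | ⟨hb1, hb2⟩
  · rw [ha3, hb3] at hab
    have : (a : ℕ) + 1 = (b : ℕ) + 1 := congrArg Fin.val hab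
    exact Fin.ext (by omega)
  · rw [ha3, hb2] at hab
    exact absurd (hab ▸ isMax_prefMax w b) ha2
  · rw [ha2, hb3] at hab
    exact absurd (hab.symm ▸ isMax_prefMax w a) hb2
  · rw [ha2, hb2] at hab
    rcases lt_trichotomy (a : ℕ) (b : ℕ) with h | h | h
    · exact absurd (blockEnd_aux w h ha1 hab) not_false
    · exact Fin.ext h
    · exact absurd (blockEnd_aux w h hb1 hab.symm) not_false

/-- Foata's first transformation (conjugated form). -/
noncomputable def Phi (w : Equiv.Perm (Fin n)) : Equiv.Perm (Fin n) :=
  w * Equiv.ofBijective (fAux w) (Finite.injective_iff_bijective.mp (fAux_injective w)) * w⁻¹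

lemma Phi_apply (w : Equiv.Perm (Fin n)) (i : Fin n) : Phi w (w i) = w (fAux w i) := by
  simp [Phi, Equiv.Perm.mul_apply]

lemma Phi_formula (w : Equiv.Perm (Fin n)) (i : Fin n) :
    Phi w (w i) = if h : (i : ℕ) + 1 < n then
        (if isMax w ⟨(i : ℕ) + 1, h⟩ then w (prefMax w i) else w ⟨(i : ℕ) + 1, h⟩)
      else w (prefMax w i) := by
  rw [Phi_apply]
  unfold fAux
  split_ifs <;> rfl

lemma prefMax_not_suffix (w : Equiv.Perm (Fin n)) (i : Fin n) :
    ∀ j, i < j → w j ≠ w (prefMax w i) := by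
  intro j hj he
  have h1 := w.injective he
  have h2 := prefMax_le w i
  rw [h1] at hj
  exact absurd h2 (not_le.mpr hj)

lemma le_of_not_suffix (w : Equiv.Perm (Fin n)) (i : Fin n) (u : Fin n)
    (hu : ∀ j, i < j → w j ≠ u) : u ≤ w (prefMax w i) := by
  have h1 : w.symm u ≤ i := by
    by_contra h
    exact hu _ (not_le.mp h) (w.apply_symm_apply u)
  have h2 := le_w_prefMax w h1
  rwa [w.apply_symm_apply] at h2

lemma isMax_iff_suffix (w : Equiv.Perm (Fin n)) (i : Fin n) (h : (i : ℕ) + 1 < n) :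
    isMax w ⟨(i : ℕ) + 1, h⟩ ↔
      ∀ u : Fin n, (∀ j, i < j → w j ≠ u) → u < w ⟨(i : ℕ) + 1, h⟩ := by
  constructor
  · intro hM u hu
    have h1 : w.symm u ≤ i := by
      by_contra hc
      exact hu _ (not_le.mp hc) (w.apply_symm_apply u)
    have h2 : w.symm u < (⟨(i : ℕ) + 1, h⟩ : Fin n) := by
      rw [Fin.lt_def]
      exact Nat.lt_succ_of_le (Fin.le_def.mp h1)
    have h3 := hM _ h2
    rwa [w.apply_symm_apply] at h3
  · intro hs j hj
    apply hs
    intro j' hj' he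
    have h1 : j' = j := w.injective he
    subst h1
    rw [Fin.lt_def] at hj'
    have hj2 : (j' : ℕ) < (i : ℕ) + 1 := hj
    omega

lemma Phi_injective : Function.Injective (Phi (n := n)) := by
  intro w w' hP
  have core : ∀ i : Fin n, (∀ j : Fin n, i < j → w j = w' j) → w i = w' i := by
    intro i hsuf
    have hi1 : ∀ h : (i : ℕ) + 1 < n, w ⟨(i : ℕ) + 1, h⟩ = w' ⟨(i : ℕ) + 1, h⟩ := fun h =>
      hsuf _ (by rw [Fin.lt_def]; exact Nat.lt_succ_self _)
    have hMval : w (prefMax w i) = w' (prefMax w' i) := by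
      apply le_antisymm
      · exact le_of_not_suffix w' i _
          (fun j hj he => prefMax_not_suffix w i j hj ((hsuf j hj) ▸ he))
      · exact le_of_not_suffix w i _
          (fun j hj he => prefMax_not_suffix w' i j hj ((hsuf j hj).symm ▸ he))
    have hMiff : ∀ h : (i : ℕ) + 1 < n,
        (isMax w ⟨(i : ℕ) + 1, h⟩ ↔ isMax w' ⟨(i : ℕ) + 1, h⟩) := by
      intro h
      rw [isMax_iff_suffix w i h, isMax_iff_suffix w' i h]
      constructor
      · intro H u hu
        rw [← hi1 h]
        exact H u (fun j hj he => hu j hj ((hsuf j hj) ▸ he))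
      · intro H u hu
        rw [hi1 h]
        exact H u (fun j hj he => hu j hj ((hsuf j hj).symm ▸ he))
    have key : Phi w (w i) = Phi w' (w' i) := by
      rw [Phi_formula, Phi_formula]
      by_cases h : (i : ℕ) + 1 < n
      · rw [dif_pos h, dif_pos h]
        by_cases hm : isMax w ⟨(i : ℕ) + 1, h⟩
        · rw [if_pos hm, if_pos ((hMiff h).mp hm), hMval]
        · rw [if_neg hm, if_neg (fun hc => hm ((hMiff h).mpr hc)), hi1 h]
      · rw [dif_neg h, dif_neg h, hMval]
    rw [hP] at key
    exact (Phi w').injective key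
  have hall : ∀ m : ℕ, ∀ i : Fin n, n ≤ (i : ℕ) + m + 1 → w i = w' i := by
    intro m
    induction m with
    | zero =>
      intro i hi
      refine core i (fun j hj => False.elim ?_)
      rw [Fin.lt_def] at hj
      have := j.isLt
      omega
    | succ m ih =>
      intro i hi
      refine core i (fun j hj => ih j ?_)
      rw [Fin.lt_def] at hj
      omega
  exact Equiv.ext fun i => hall n i (by omega)

lemma desCount_eq_excCount (X Y : Set ℕ) (w : Equiv.Perm (Fin n)) :
    desCount X Y n w = excCount Y X n (Phi w)⁻¹ := by
  set σ := Phi w with hσdef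
  have h2 : {m : Fin n | (σ m : ℕ) < (m : ℕ) ∧ ((m : ℕ) + 1) ∈ X ∧ ((σ m : ℕ) + 1) ∈ Y}
      = w '' {i : Fin n | ∃ h : (i : ℕ) + 1 < n,
          (w ⟨(i : ℕ) + 1, h⟩ : ℕ) < (w i : ℕ) ∧
          ((w i : ℕ) + 1) ∈ X ∧ ((w ⟨(i : ℕ) + 1, h⟩ : ℕ) + 1) ∈ Y} := by
    ext m
    simp only [Set.mem_setOf_eq, Set.mem_image]
    constructor
    · rintro ⟨hlt, hx, hy⟩
      obtain ⟨i, rfl⟩ : ∃ i, w i = m := ⟨w.symm m, w.apply_symm_apply m⟩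
      refine ⟨i, ?_, rfl⟩
      have hσm := Phi_formula w i
      have hnotpref : σ (w i) ≠ w (prefMax w i) := by
        intro he
        rw [he] at hlt
        have := Fin.le_def.mp (le_w_prefMax w (le_refl i))
        omega
      by_cases h : (i : ℕ) + 1 < n
      · by_cases hm : isMax w ⟨(i : ℕ) + 1, h⟩
        · rw [dif_pos h, if_pos hm] at hσm
          exact absurd hσm hnotpref
        · rw [dif_pos h, if_neg hm] at hσm
          exact ⟨h, by rw [← hσm]; exact hlt, hx, by rw [← hσm]; exact hy⟩
      · rw [dif_neg h] at hσm
        exact absurd hσm hnotpref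
    · rintro ⟨i, ⟨h, hlt, hx, hy⟩, rfl⟩
      have hm : ¬ isMax w ⟨(i : ℕ) + 1, h⟩ := by
        intro hM
        have h1 := hM i (by rw [Fin.lt_def]; exact Nat.lt_succ_self _)
        rw [Fin.lt_def] at h1
        have h2 : (w i : ℕ) < (w ⟨(i : ℕ) + 1, h⟩ : ℕ) := h1
        omega
      have hσm := Phi_formula w i
      rw [dif_pos h, if_neg hm] at hσm
      exact ⟨by rw [hσm]; exact hlt, hx, by rw [hσm]; exact hy⟩
  have h1 : {i : Fin n | (i : ℕ) < (σ⁻¹ i : ℕ) ∧ ((i : ℕ) + 1) ∈ Y ∧ ((σ⁻¹ i : ℕ) + 1) ∈ X}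
      = σ '' {m : Fin n | (σ m : ℕ) < (m : ℕ) ∧ ((m : ℕ) + 1) ∈ X ∧ ((σ m : ℕ) + 1) ∈ Y} := by
    ext j
    simp only [Set.mem_setOf_eq, Set.mem_image]
    constructor
    · rintro ⟨hlt, hy, hx⟩
      refine ⟨σ⁻¹ j, ⟨?_, hx, ?_⟩, ?_⟩
      · rw [show σ (σ⁻¹ j) = j from σ.apply_symm_apply j]; exact hlt
      · rw [show σ (σ⁻¹ j) = j from σ.apply_symm_apply j]; exact hy
      · exact σ.apply_symm_apply j
    · rintro ⟨m, ⟨hlt, hx, hy⟩, rfl⟩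
      refine ⟨?_, hy, ?_⟩
      · rw [show σ⁻¹ (σ m) = m from σ.symm_apply_apply m]; exact hlt
      · rw [show σ⁻¹ (σ m) = m from σ.symm_apply_apply m]; exact hx
  rw [desCount, excCount, h1, h2, Set.ncard_image_of_injective _ σ.injective,
    Set.ncard_image_of_injective _ w.injective]

lemma desCount_le (X Y : Set ℕ) (w : Equiv.Perm (Fin n)) : desCount X Y n w ≤ n := by
  rw [desCount]
  calc _ ≤ (Set.univ : Set (Fin n)).ncard :=
        Set.ncard_le_ncard (Set.subset_univ _) Set.finite_univ
    _ = n := by rw [Set.ncard_univ, Nat.card_eq_fintype_card, Fintype.card_fin]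

lemma excCount_le (X Y : Set ℕ) (w : Equiv.Perm (Fin n)) : excCount X Y n w ≤ n := by
  rw [excCount]
  calc _ ≤ (Set.univ : Set (Fin n)).ncard :=
        Set.ncard_le_ncard (Set.subset_univ _) Set.finite_univ
    _ = n := by rw [Set.ncard_univ, Nat.card_eq_fintype_card, Fintype.card_fin]

end Foata

/-- Foata's first transformation: `D_{n,k}^{X,Y} = E_{n,k}^{Y,X}` for all `X, Y, n, k`. -/
theorem D_eq_E (X Y : Set ℕ) (hX : 0 ∉ X) (hY : 0 ∉ Y) (n : ℕ) (hn : 1 ≤ n) (k : ℕ) :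
    D X Y n k = E Y X n k := by
  classical
  have hle : ∀ m : ℕ, D X Y n m ≤ E Y X n m := by
    intro m
    have hinj : Function.Injective
        (fun σ : {σ : Equiv.Perm (Fin n) // desCount X Y n σ = m} =>
          (⟨(Foata.Phi σ.1)⁻¹, by
            rw [← Foata.desCount_eq_excCount X Y σ.1]; exact σ.2⟩ :
            {σ : Equiv.Perm (Fin n) // excCount Y X n σ = m})) := by
      intro a b h
      have h1 : (Foata.Phi a.1)⁻¹ = (Foata.Phi b.1)⁻¹ := congrArg Subtype.val h
      exact Subtype.ext (Foata.Phi_injective (inv_injective h1))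
    exact Nat.card_le_card_of_injective _ hinj
  have cardSet : ∀ (f : Equiv.Perm (Fin n) → ℕ) (m : ℕ),
      Nat.card {σ : Equiv.Perm (Fin n) | f σ = m}
        = (Finset.univ.filter (fun σ => f σ = m)).card := by
    intro f m
    rw [Nat.card_eq_fintype_card]
    exact Fintype.card_subtype _
  by_cases hk : k ≤ n
  · have hsum : ∑ m ∈ Finset.range (n + 1), D X Y n m
        = ∑ m ∈ Finset.range (n + 1), E Y X n m := by
      have hD : ∑ m ∈ Finset.range (n + 1), D X Y n m
          = (Finset.univ : Finset (Equiv.Perm (Fin n))).card := by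
        simp only [D, cardSet]
        exact (Finset.card_eq_sum_card_fiberwise (fun σ _ =>
          Finset.mem_range.mpr (Nat.lt_succ_of_le (Foata.desCount_le X Y σ)))).symm
      have hE : ∑ m ∈ Finset.range (n + 1), E Y X n m
          = (Finset.univ : Finset (Equiv.Perm (Fin n))).card := by
        simp only [E, cardSet]
        exact (Finset.card_eq_sum_card_fiberwise (fun σ _ =>
          Finset.mem_range.mpr (Nat.lt_succ_of_le (Foata.excCount_le Y X σ)))).symm
      rw [hD, hE]
    exact (Finset.sum_eq_sum_iff_of_le (fun m _ => hle m)).mp hsum k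
      (Finset.mem_range.mpr (Nat.lt_succ_of_le hk))
  · push_neg at hk
    have hD0 : D X Y n k = 0 := by
      rw [D, cardSet]
      rw [Finset.card_eq_zero, Finset.filter_eq_empty_iff]
      intro σ _
      have := Foata.desCount_le X Y σ
      omega
    have hE0 : E Y X n k = 0 := by
      rw [E, cardSet]
      rw [Finset.card_eq_zero, Finset.filter_eq_empty_iff]
      intro σ _
      have := Foata.excCount_le Y X σ
      omega
    rw [hD0, hE0]
end

section
/- Let X and Y be subsets of the positive integers with X ∪ Y = ℕ and X ∩ Y = ∅, and let n ≥ 1. Then Γ_{n,s}^{X,Y} = 0 unless s = 2k + y_n − x_n for some integer k ≥ 0, and for every k with 0 ≤ k ≤ x_n and x_n − k ≤ y_n, Γ_{n, 2k + y_n − x_n}^{X,Y} = (x_n)! · (y_n)! · C(x_n, k) · C(y_n, x_n − k), where C(a,b) denotes the binomial coefficient. -/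
/-- `γ_{X,Y}(σ) = |{i ∈ X : σ_i ∈ X} ∪ {i ∈ Y : σ_i ∈ Y}|`
(positions and values of `Fin n` are identified with `{1, ..., n}` via `i ↦ i + 1`). -/
noncomputable def gammaCount (X Y : Set ℕ) (n : ℕ) (σ : Equiv.Perm (Fin n)) : ℕ :=
  ({i : Fin n | ((i : ℕ) + 1) ∈ X ∧ ((σ i : ℕ) + 1) ∈ X} ∪
    {i : Fin n | ((i : ℕ) + 1) ∈ Y ∧ ((σ i : ℕ) + 1) ∈ Y}).ncard

/-- `Γ_{n,s}^{X,Y}`: the number of permutations of `[n]` with `γ_{X,Y}(σ) = s`. -/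
noncomputable def Gam (X Y : Set ℕ) (n s : ℕ) : ℕ :=
  Nat.card {σ : Equiv.Perm (Fin n) | gammaCount X Y n σ = s}

open Finset

lemma my_subtypeCongr_apply {α : Type*} {p q : α → Prop} [DecidablePred p] [DecidablePred q]
    (e : { x // p x } ≃ { x // q x }) (f : { x // ¬p x } ≃ { x // ¬q x }) (x : α) :
    Equiv.subtypeCongr e f x = if h : p x then (e ⟨x, h⟩ : α) else (f ⟨x, h⟩ : α) := by
  by_cases h : p x <;> simp [Equiv.subtypeCongr, h]

section Aux

variable {α : Type*} [Fintype α] [DecidableEq α]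

/-- split a finset by intersection with `A` and `Aᶜ`. -/
lemma card_split (A U : Finset α) : (A ∩ U).card + (Aᶜ ∩ U).card = U.card := by
  rw [← Finset.card_union_of_disjoint]
  · congr 1
    rw [← Finset.union_inter_distrib_right, Finset.union_compl, Finset.univ_inter]
  · exact Finset.disjoint_of_subset_left Finset.inter_subset_left
      (Finset.disjoint_of_subset_right Finset.inter_subset_left disjoint_compl_right)

set_option maxHeartbeats 1000000 in
/-- the number of permutations mapping `U` exactly onto `A`. -/
lemma card_perm_fiber (A U : Finset α) (h : U.card = A.card) :
    (univ.filter (fun σ : Equiv.Perm α => A.map σ.symm.toEmbedding = U)).card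
      = A.card.factorial * Aᶜ.card.factorial := by
  classical
  have hmem : ∀ σ : Equiv.Perm α, A.map σ.symm.toEmbedding = U ↔ ∀ i, σ i ∈ A ↔ i ∈ U := by
    intro σ
    rw [Finset.ext_iff]
    constructor
    · intro hh i
      have := hh i
      rw [Finset.mem_map_equiv] at this
      simpa using this
    · intro hh i
      rw [Finset.mem_map_equiv]
      simpa using hh i
  have hcard : (univ.filter (fun σ : Equiv.Perm α => A.map σ.symm.toEmbedding = U)).card
      = Fintype.card (({ i // i ∈ U } ≃ { i // i ∈ A }) × ({ i // i ∉ U } ≃ { i // i ∉ A })) := by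
    rw [← Fintype.card_coe]
    apply Fintype.card_congr
    refine
      { toFun := fun σ =>
          have hσ : ∀ i, σ.1 i ∈ A ↔ i ∈ U :=
            (hmem σ.1).mp (Finset.mem_filter.mp σ.2).2
          (⟨fun i => ⟨σ.1 i, (hσ i).mpr i.2⟩,
            fun a => ⟨σ.1.symm a, by
              have h2 := hσ (σ.1.symm a)
              rw [Equiv.apply_symm_apply] at h2
              exact h2.mp a.2⟩,
            fun i => by simp, fun a => by simp⟩,
           ⟨fun i => ⟨σ.1 i, fun hc => i.2 ((hσ i).mp hc)⟩,
            fun a => ⟨σ.1.symm a, fun hc => a.2 (by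
              have h2 := hσ (σ.1.symm a)
              rw [Equiv.apply_symm_apply] at h2
              exact h2.mpr hc)⟩,
            fun i => by simp, fun a => by simp⟩)
        invFun := fun ef =>
          ⟨Equiv.subtypeCongr ef.1 ef.2, by
            rw [Finset.mem_filter, hmem]
            refine ⟨Finset.mem_univ _, fun i => ?_⟩
            rw [my_subtypeCongr_apply]
            by_cases hi : i ∈ U
            · simp only [dif_pos hi]
              exact ⟨fun _ => hi, fun _ => (ef.1 ⟨i, hi⟩).2⟩
            · simp only [dif_neg hi]
              exact ⟨fun hc => absurd hc (ef.2 ⟨i, hi⟩).2, fun hc => absurd hc hi⟩⟩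
        left_inv := fun σ => by
          apply Subtype.ext
          apply Equiv.ext
          intro i
          rw [my_subtypeCongr_apply]
          by_cases hi : i ∈ U <;> simp [hi]
        right_inv := fun ef => by
          refine Prod.ext ?_ ?_
          · apply Equiv.ext
            intro i
            apply Subtype.ext
            show (Equiv.subtypeCongr ef.1 ef.2) (i : α) = (ef.1 i : α)
            rw [my_subtypeCongr_apply, dif_pos i.2]
          · apply Equiv.ext
            intro i
            apply Subtype.ext
            show (Equiv.subtypeCongr ef.1 ef.2) (i : α) = (ef.2 i : α)
            rw [my_subtypeCongr_apply, dif_neg i.2] }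
  rw [hcard, Fintype.card_prod]
  have c1 : Fintype.card { i // i ∈ U } = Fintype.card { i // i ∈ A } := by
    simp [Fintype.card_coe, h]
  have c2 : Fintype.card { i // i ∉ U } = Fintype.card { i // i ∉ A } := by
    rw [Fintype.card_subtype_compl, Fintype.card_subtype_compl, Fintype.card_coe,
      Fintype.card_coe, h]
  rw [Fintype.card_equiv (Fintype.equivOfCardEq c1), Fintype.card_equiv (Fintype.equivOfCardEq c2)]
  congr 1
  · rw [c1, Fintype.card_coe]
  · rw [c2, Fintype.card_subtype_compl, Fintype.card_coe, ← Finset.card_compl]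

/-- main counting lemma. -/
lemma count_perms (A : Finset α) (k : ℕ) (hk : k ≤ A.card) :
    (univ.filter (fun σ : Equiv.Perm α =>
        (A ∩ A.map σ.symm.toEmbedding).card = k)).card
      = A.card.factorial * Aᶜ.card.factorial * A.card.choose k
          * Aᶜ.card.choose (A.card - k) := by
  classical
  set x := A.card with hx
  set y := Aᶜ.card with hy
  set t : Finset (Finset α) :=
    univ.filter (fun U => (A ∩ U).card = k ∧ (Aᶜ ∩ U).card = x - k) with ht
  have hfib : (univ.filter (fun σ : Equiv.Perm α =>
      (A ∩ A.map σ.symm.toEmbedding).card = k)).card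
      = ∑ U ∈ t, ((univ.filter (fun σ : Equiv.Perm α =>
          (A ∩ A.map σ.symm.toEmbedding).card = k)).filter
            (fun σ => A.map σ.symm.toEmbedding = U)).card := by
    apply Finset.card_eq_sum_card_fiberwise
    intro σ hσ
    rw [Finset.mem_coe, Finset.mem_filter] at hσ
    beta_reduce
    rw [Finset.mem_coe, ht, Finset.mem_filter]
    refine ⟨Finset.mem_univ _, hσ.2, ?_⟩
    have := card_split A (A.map σ.symm.toEmbedding)
    rw [Finset.card_map, hσ.2] at this
    omega
  rw [hfib]
  have hfibval : ∀ U ∈ t, ((univ.filter (fun σ : Equiv.Perm α =>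
      (A ∩ A.map σ.symm.toEmbedding).card = k)).filter
        (fun σ => A.map σ.symm.toEmbedding = U)).card = x.factorial * y.factorial := by
    intro U hU
    rw [ht, Finset.mem_filter] at hU
    have hUcard : U.card = A.card := by
      have := card_split A U
      omega
    rw [Finset.filter_filter]
    have heq : (univ.filter (fun σ : Equiv.Perm α =>
        (A ∩ A.map σ.symm.toEmbedding).card = k ∧ A.map σ.symm.toEmbedding = U))
        = univ.filter (fun σ : Equiv.Perm α => A.map σ.symm.toEmbedding = U) := by
      apply Finset.filter_congr
      intro σ _
      constructor
      · exact fun hh => hh.2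
      · intro hh
        exact ⟨by rw [hh]; exact hU.2.1, hh⟩
    rw [heq]
    exact card_perm_fiber A U hUcard
  rw [Finset.sum_congr rfl hfibval, Finset.sum_const, smul_eq_mul]
  have htcard : t.card = x.choose k * y.choose (x - k) := by
    rw [← Finset.card_powersetCard k A, ← Finset.card_powersetCard (x - k) Aᶜ,
      ← Finset.card_product]
    apply Finset.card_bij' (fun U _ => (A ∩ U, Aᶜ ∩ U)) (fun p _ => p.1 ∪ p.2)
    · intro U hU
      rw [ht, Finset.mem_filter] at hU
      rw [Finset.mem_product, Finset.mem_powersetCard, Finset.mem_powersetCard]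
      exact ⟨⟨Finset.inter_subset_left, hU.2.1⟩, ⟨Finset.inter_subset_left, hU.2.2⟩⟩
    · intro p hp
      rw [Finset.mem_product, Finset.mem_powersetCard, Finset.mem_powersetCard] at hp
      rw [ht, Finset.mem_filter]
      have h1 : A ∩ (p.1 ∪ p.2) = p.1 := by
        rw [Finset.inter_union_distrib_left]
        have e1 : A ∩ p.1 = p.1 := Finset.inter_eq_right.mpr hp.1.1
        have e2 : A ∩ p.2 = ∅ := by
          rw [← Finset.disjoint_iff_inter_eq_empty]
          exact Finset.disjoint_of_subset_right hp.2.1 disjoint_compl_right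
        rw [e1, e2, Finset.union_empty]
      have h2 : Aᶜ ∩ (p.1 ∪ p.2) = p.2 := by
        rw [Finset.inter_union_distrib_left]
        have e1 : Aᶜ ∩ p.1 = ∅ := by
          rw [← Finset.disjoint_iff_inter_eq_empty]
          exact Finset.disjoint_of_subset_right hp.1.1 disjoint_compl_left
        have e2 : Aᶜ ∩ p.2 = p.2 := Finset.inter_eq_right.mpr hp.2.1
        rw [e1, e2, Finset.empty_union]
      exact ⟨Finset.mem_univ _, by rw [h1]; exact hp.1.2, by rw [h2]; exact hp.2.2⟩
    · intro U hU
      ext i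
      simp only [Finset.mem_union, Finset.mem_inter, Finset.mem_compl]
      by_cases hi : i ∈ A <;> simp [hi]
    · intro p hp
      rw [Finset.mem_product, Finset.mem_powersetCard, Finset.mem_powersetCard] at hp
      have e1 : A ∩ (p.1 ∪ p.2) = p.1 := by
        rw [Finset.inter_union_distrib_left]
        have h1 : A ∩ p.1 = p.1 := Finset.inter_eq_right.mpr hp.1.1
        have h2 : A ∩ p.2 = ∅ := by
          rw [← Finset.disjoint_iff_inter_eq_empty]
          exact Finset.disjoint_of_subset_right hp.2.1 disjoint_compl_right
        rw [h1, h2, Finset.union_empty]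
      have e2 : Aᶜ ∩ (p.1 ∪ p.2) = p.2 := by
        rw [Finset.inter_union_distrib_left]
        have h1 : Aᶜ ∩ p.1 = ∅ := by
          rw [← Finset.disjoint_iff_inter_eq_empty]
          exact Finset.disjoint_of_subset_right hp.1.1 disjoint_compl_left
        have h2 : Aᶜ ∩ p.2 = p.2 := Finset.inter_eq_right.mpr hp.2.1
        rw [h1, h2, Finset.empty_union]
      exact Prod.ext e1 e2
  rw [htcard]
  ring

end Aux

/-- `cnt` as a `Finset.card`. -/
lemma cnt_eq_card (Z : Set ℕ) (n : ℕ) [DecidablePred fun i : Fin n => ((i : ℕ) + 1) ∈ Z] :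
    cnt Z n = (univ.filter (fun i : Fin n => ((i : ℕ) + 1) ∈ Z)).card := by
  have hset : Z ∩ Set.Icc 1 n
      = (fun i : Fin n => (i : ℕ) + 1) '' ↑(univ.filter (fun i : Fin n => ((i : ℕ) + 1) ∈ Z)) := by
    ext m
    simp only [Set.mem_inter_iff, Set.mem_Icc, Set.mem_image, Finset.mem_coe,
      Finset.mem_filter, Finset.mem_univ, true_and]
    constructor
    · rintro ⟨hm, h1, h2⟩
      have hlt : m - 1 < n := by omega
      refine ⟨⟨m - 1, hlt⟩, ?_, ?_⟩
      · show (m - 1) + 1 ∈ Z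
        have he : m - 1 + 1 = m := by omega
        rw [he]; exact hm
      · show (m - 1) + 1 = m
        omega
    · rintro ⟨i, hi, rfl⟩
      exact ⟨hi, by omega, by omega⟩
  rw [cnt, hset, Set.ncard_image_of_injective _ (fun i j hij => by
    apply Fin.ext
    have hij2 : (i : ℕ) + 1 = (j : ℕ) + 1 := hij
    omega), Set.ncard_coe_finset]

/-- Theorem 8: if `X ∪ Y` is the set of positive integers and `X ∩ Y = ∅`, then
`Γ_{n,s}^{X,Y} = 0` unless `s = 2k + y_n - x_n` for some `k ≥ 0`, in which case
`Γ_{n,2k+y_n-x_n}^{X,Y} = x_n! y_n! C(x_n, k) C(y_n, x_n - k)`. -/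
theorem Gamma_formula (X Y : Set ℕ) (hX : 0 ∉ X) (hY : 0 ∉ Y)
    (hUnion : X ∪ Y = {m : ℕ | 1 ≤ m}) (hInter : X ∩ Y = ∅)
    (n : ℕ) (hn : 1 ≤ n) :
    (∀ s : ℕ, (∀ k : ℕ, (s : ℤ) ≠ 2 * (k : ℤ) + (cnt Y n : ℤ) - (cnt X n : ℤ)) →
      Gam X Y n s = 0) ∧
    (∀ k s : ℕ, k ≤ cnt X n → cnt X n - k ≤ cnt Y n →
      (s : ℤ) = 2 * (k : ℤ) + (cnt Y n : ℤ) - (cnt X n : ℤ) →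
      Gam X Y n s =
        (cnt X n).factorial * (cnt Y n).factorial *
          (cnt X n).choose k * (cnt Y n).choose (cnt X n - k)) := by
  classical
  have hXY : ∀ m : ℕ, 1 ≤ m → (m ∈ Y ↔ m ∉ X) := by
    intro m hm
    constructor
    · intro hmY hmX
      have hmem : m ∈ X ∩ Y := ⟨hmX, hmY⟩
      rw [hInter] at hmem
      exact hmem
    · intro hmX
      have hmem : m ∈ X ∪ Y := by rw [hUnion]; exact hm
      rcases hmem with h | h
      · exact absurd h hmX
      · exact h
  set A : Finset (Fin n) := univ.filter (fun i : Fin n => ((i : ℕ) + 1) ∈ X) with hA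
  have memA : ∀ i : Fin n, i ∈ A ↔ ((i : ℕ) + 1) ∈ X := by
    intro i; rw [hA]; simp
  have memAc : ∀ i : Fin n, i ∈ Aᶜ ↔ ((i : ℕ) + 1) ∈ Y := by
    intro i
    rw [Finset.mem_compl, memA i, hXY ((i : ℕ) + 1) (by omega)]
  have hcntX : cnt X n = A.card := cnt_eq_card X n
  have hcntY : cnt Y n = Aᶜ.card := by
    rw [cnt_eq_card Y n]
    congr 1
    ext i
    rw [memAc i, Finset.mem_filter]
    simp
  have hmemU : ∀ (σ : Equiv.Perm (Fin n)) (i : Fin n),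
      i ∈ A.map σ.symm.toEmbedding ↔ σ i ∈ A := by
    intro σ i
    rw [Finset.mem_map_equiv]
    simp
  have hgamma : ∀ σ : Equiv.Perm (Fin n),
      gammaCount X Y n σ + A.card = 2 * (A ∩ A.map σ.symm.toEmbedding).card + Aᶜ.card := by
    intro σ
    set U := A.map σ.symm.toEmbedding with hU
    have hs1 : {i : Fin n | ((i : ℕ) + 1) ∈ X ∧ ((σ i : ℕ) + 1) ∈ X} = ↑(A ∩ U) := by
      ext i
      simp only [Set.mem_setOf_eq, Finset.coe_inter, Set.mem_inter_iff, Finset.mem_coe]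
      constructor
      · rintro ⟨h1, h2⟩
        exact ⟨(memA i).mpr h1, (hmemU σ i).mpr ((memA (σ i)).mpr h2)⟩
      · rintro ⟨h1, h2⟩
        exact ⟨(memA i).mp h1, (memA (σ i)).mp ((hmemU σ i).mp h2)⟩
    have hs2 : {i : Fin n | ((i : ℕ) + 1) ∈ Y ∧ ((σ i : ℕ) + 1) ∈ Y} = ↑(Aᶜ ∩ Uᶜ) := by
      ext i
      simp only [Set.mem_setOf_eq, Finset.coe_inter, Set.mem_inter_iff, Finset.mem_coe]
      constructor
      · rintro ⟨h1, h2⟩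
        refine ⟨(memAc i).mpr h1, Finset.mem_compl.mpr (fun hc => ?_)⟩
        exact Finset.mem_compl.mp ((memAc (σ i)).mpr h2) ((hmemU σ i).mp hc)
      · rintro ⟨h1, h2⟩
        refine ⟨(memAc i).mp h1, (memAc (σ i)).mp (Finset.mem_compl.mpr (fun hc => ?_))⟩
        exact Finset.mem_compl.mp h2 ((hmemU σ i).mpr hc)
    have hdisj : Disjoint {i : Fin n | ((i : ℕ) + 1) ∈ X ∧ ((σ i : ℕ) + 1) ∈ X}
        {i : Fin n | ((i : ℕ) + 1) ∈ Y ∧ ((σ i : ℕ) + 1) ∈ Y} := by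
      rw [Set.disjoint_left]
      intro i hi1 hi2
      simp only [Set.mem_setOf_eq] at hi1 hi2
      exact ((hXY ((i : ℕ) + 1) (by omega)).mp hi2.1) hi1.1
    rw [gammaCount, Set.ncard_union_eq hdisj (Set.toFinite _) (Set.toFinite _),
      hs1, hs2, Set.ncard_coe_finset, Set.ncard_coe_finset]
    have e1 : (A ∩ U).card + (Aᶜ ∩ U).card = U.card := card_split A U
    have e2 : (A ∩ Uᶜ).card + (Aᶜ ∩ Uᶜ).card = Uᶜ.card := card_split A Uᶜ
    have e3 : (U ∩ A).card + (Uᶜ ∩ A).card = A.card := card_split U A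
    have e4 : U.card = A.card := Finset.card_map _
    have e5 : Uᶜ.card = Fintype.card (Fin n) - U.card := Finset.card_compl U
    have e6 : Aᶜ.card = Fintype.card (Fin n) - A.card := Finset.card_compl A
    have e7 : A.card ≤ Fintype.card (Fin n) := Finset.card_le_univ A
    rw [Finset.inter_comm U A, Finset.inter_comm Uᶜ A] at e3
    omega
  have hGam : ∀ s : ℕ, Gam X Y n s
      = (univ.filter (fun σ : Equiv.Perm (Fin n) => gammaCount X Y n σ = s)).card := by
    intro s
    rw [Gam, Nat.card_coe_set_eq]
    have hset : {σ : Equiv.Perm (Fin n) | gammaCount X Y n σ = s}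
        = ↑(univ.filter (fun σ : Equiv.Perm (Fin n) => gammaCount X Y n σ = s)) := by
      ext σ; simp
    rw [hset, Set.ncard_coe_finset]
  constructor
  · intro s hs
    rw [hGam s, Finset.card_eq_zero, Finset.filter_eq_empty_iff]
    intro σ _ hσ
    apply hs ((A ∩ A.map σ.symm.toEmbedding).card)
    have hg := hgamma σ
    rw [hσ] at hg
    rw [hcntX, hcntY]
    omega
  · intro k s hk hk' hs
    rw [hcntX, hcntY] at hs ⊢
    rw [hcntX] at hk
    rw [hcntX, hcntY] at hk'
    have hseq : ∀ σ : Equiv.Perm (Fin n),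
        gammaCount X Y n σ = s ↔ (A ∩ A.map σ.symm.toEmbedding).card = k := by
      intro σ
      have hg := hgamma σ
      omega
    rw [hGam s]
    have hflt : (univ.filter (fun σ : Equiv.Perm (Fin n) => gammaCount X Y n σ = s))
        = univ.filter (fun σ : Equiv.Perm (Fin n) =>
            (A ∩ A.map σ.symm.toEmbedding).card = k) := by
      apply Finset.filter_congr
      intro σ _
      exact hseq σ
    rw [hflt]
    exact count_perms A k hk
end
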